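/- For every integer m ≥ 2, the cyclic matching sequencibility of the complete graph K_{2m} equals m - 1. -/

import Mathlib

/-- Two edges of a graph (as unordered pairs of vertices) are *disjoint*
if they share no vertex. -/
def edgesDisjoint {V : Type*} (e₁ e₂ : Sym2 V) : Prop :=
  ∀ v : V, v ∈ e₁ → v ∉ e₂

/-- The number of edges of a graph `G`. -/
noncomputable def edgeCount {V : Type*} (G : SimpleGraph V) : ℕ :=
  Nat.card G.edgeSet

/-- A linear ordering `f` of the edges of `G` has matching number at least `d`
if every `d` consecutive edges in the ordering are pairwise disjoint. -/
def LinearGood {V : Type*} (G : SimpleGraph V)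
    (f : Fin (edgeCount G) ≃ G.edgeSet) (d : ℕ) : Prop :=
  ∀ j k : Fin (edgeCount G), j ≠ k → (j : ℕ) < (k : ℕ) + d → (k : ℕ) < (j : ℕ) + d →
    edgesDisjoint (f j : Sym2 V) (f k : Sym2 V)

/-- The matching sequencibility `ms G`: the largest `d` (necessarily at most the
number of edges) for which some linear ordering of the edges of `G` has every
`d` consecutive edges forming a matching. -/
noncomputable def ms {V : Type*} (G : SimpleGraph V) : ℕ :=
  sSup {d : ℕ | d ≤ edgeCount G ∧ ∃ f : Fin (edgeCount G) ≃ G.edgeSet, LinearGood G f d}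

/-- A cyclic ordering `f : ZMod N ≃ edges of G` has cyclic matching number at least `d`
if every `d` cyclically consecutive edges in the ordering are pairwise disjoint. -/
def CyclicGood {V : Type*} (G : SimpleGraph V) {N : ℕ}
    (f : ZMod N ≃ G.edgeSet) (d : ℕ) : Prop :=
  ∀ (i : ZMod N) (j k : ℕ), j < d → k < d → j ≠ k →
    edgesDisjoint (f (i + (j : ZMod N)) : Sym2 V) (f (i + (k : ZMod N)) : Sym2 V)

/-- The cyclic matching sequencibility `cms G`: the largest `d` for which some
cyclic ordering of the edges of `G` has every `d` cyclically consecutive edges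
forming a matching. -/
noncomputable def cms {V : Type*} (G : SimpleGraph V) : ℕ :=
  sSup {d : ℕ | ∃ f : ZMod (edgeCount G) ≃ G.edgeSet, CyclicGood G f d}

namespace CMSaux

lemma edgesDisjoint_symm {V : Type*} {e₁ e₂ : Sym2 V} (h : edgesDisjoint e₁ e₂) :
    edgesDisjoint e₂ e₁ := fun v hv hv' => h v hv' hv

lemma disj_mk {V : Type*} {a b c d : V} (h1 : a ≠ c) (h2 : a ≠ d) (h3 : b ≠ c) (h4 : b ≠ d) :
    edgesDisjoint s(a,b) s(c,d) := by
  intro v hv hv'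
  rw [Sym2.mem_iff] at hv hv'
  rcases hv with rfl | rfl <;> rcases hv' with rfl | rfl <;> simp_all

lemma cast_inj {n x y : ℕ} (hx : x < n) (hy : y < n)
    (h : (x : ZMod n) = (y : ZMod n)) : x = y := by
  rw [ZMod.natCast_eq_natCast_iff'] at h
  rwa [Nat.mod_eq_of_lt hx, Nat.mod_eq_of_lt hy] at h

variable (m : ℕ)

def inf (hm : 2 ≤ m) : Fin (2*m) := ⟨2*m-1, by omega⟩

def vtx (hm : 2 ≤ m) (x : ZMod (2*m-1)) : Fin (2*m) :=
  haveI : NeZero (2*m-1) := ⟨by omega⟩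
  ⟨x.val, by have := ZMod.val_lt x; omega⟩

lemma vtx_injective (hm : 2 ≤ m) : Function.Injective (vtx m hm) := by
  haveI : NeZero (2*m-1) := ⟨by omega⟩
  intro x y h
  exact ZMod.val_injective _ (congrArg Fin.val h)

lemma vtx_ne_inf (hm : 2 ≤ m) (x : ZMod (2*m-1)) : vtx m hm x ≠ inf m hm := by
  haveI : NeZero (2*m-1) := ⟨by omega⟩
  intro h
  have h1 := congrArg Fin.val h
  have h2 := ZMod.val_lt x
  simp only [vtx, inf] at h1
  omega

lemma inf_ne_vtx (hm : 2 ≤ m) (x : ZMod (2*m-1)) : inf m hm ≠ vtx m hm x :=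
  (vtx_ne_inf m hm x).symm

lemma vne (hm : 2 ≤ m) {x y : ZMod (2*m-1)} (h : x ≠ y) :
    vtx m hm x ≠ vtx m hm y := fun he => h (vtx_injective m hm he)

lemma ncast_ne (hm : 2 ≤ m) {u v : ℕ} (hu : u < 2*m-1) (hv : v < 2*m-1) (huv : u ≠ v) :
    ((u : ℕ) : ZMod (2*m-1)) ≠ ((v : ℕ) : ZMod (2*m-1)) :=
  fun he => huv (cast_inj hu hv he)

/-- The `k`-th edge of round `r` in the round-robin 1-factorization. -/
def E (hm : 2 ≤ m) (r : ZMod (2*m-1)) (k : ℕ) : Sym2 (Fin (2*m)) :=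
  if k = 0 then s(inf m hm, vtx m hm r)
  else s(vtx m hm (r + (k : ZMod (2*m-1))), vtx m hm (r - (k : ZMod (2*m-1))))

lemma E_not_diag (hm : 2 ≤ m) (r : ZMod (2*m-1)) {k : ℕ} (hk : k < m) :
    ¬ (E m hm r k).IsDiag := by
  rcases Nat.eq_zero_or_pos k with rfl | hp
  · simp only [E, if_pos rfl, Sym2.mk_isDiag_iff]
    exact inf_ne_vtx m hm r
  · simp only [E, if_neg (by omega : k ≠ 0), Sym2.mk_isDiag_iff]
    refine vne m hm fun h => ncast_ne m hm (u := 2*k) (v := 0)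
      (by omega) (by omega) (by omega) ?_
    push_cast
    linear_combination h

lemma L1 (hm : 2 ≤ m) (r : ZMod (2*m-1)) {k1 k2 : ℕ} (h1 : k1 < m) (h2 : k2 < m)
    (hne : k1 ≠ k2) : edgesDisjoint (E m hm r k1) (E m hm r k2) := by
  rcases Nat.eq_zero_or_pos k1 with rfl | hp1 <;> rcases Nat.eq_zero_or_pos k2 with rfl | hp2
  · exact absurd rfl hne
  · simp only [E, if_pos rfl, if_neg (by omega : k2 ≠ 0)]
    refine disj_mk (inf_ne_vtx m hm _) (inf_ne_vtx m hm _) ?_ ?_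
    · refine vne m hm fun h => ncast_ne m hm (u := k2) (v := 0)
        (by omega) (by omega) (by omega) ?_
      push_cast
      linear_combination -h
    · refine vne m hm fun h => ncast_ne m hm (u := k2) (v := 0)
        (by omega) (by omega) (by omega) ?_
      push_cast
      linear_combination h
  · simp only [E, if_pos rfl, if_neg (by omega : k1 ≠ 0)]
    refine disj_mk (vtx_ne_inf m hm _) ?_ (vtx_ne_inf m hm _) ?_
    · refine vne m hm fun h => ncast_ne m hm (u := k1) (v := 0)
        (by omega) (by omega) (by omega) ?_
      push_cast
      linear_combination h
    · refine vne m hm fun h => ncast_ne m hm (u := k1) (v := 0)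
        (by omega) (by omega) (by omega) ?_
      push_cast
      linear_combination -h
  · simp only [E, if_neg (by omega : k1 ≠ 0), if_neg (by omega : k2 ≠ 0)]
    refine disj_mk ?_ ?_ ?_ ?_
    · refine vne m hm fun h => ncast_ne m hm (u := k1) (v := k2)
        (by omega) (by omega) (by omega) ?_
      linear_combination h
    · refine vne m hm fun h => ncast_ne m hm (u := k1 + k2) (v := 0)
        (by omega) (by omega) (by omega) ?_
      push_cast
      linear_combination h
    · refine vne m hm fun h => ncast_ne m hm (u := k1 + k2) (v := 0)
        (by omega) (by omega) (by omega) ?_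
      push_cast
      linear_combination -h
    · refine vne m hm fun h => ncast_ne m hm (u := k1) (v := k2)
        (by omega) (by omega) (by omega) ?_
      linear_combination -h

lemma L2 (hm : 2 ≤ m) (r : ZMod (2*m-1)) {k1 k2 : ℕ} (h1 : k1 < m) (h2 : k2 + 2 ≤ k1) :
    edgesDisjoint (E m hm r k1) (E m hm (r+1) k2) := by
  rcases Nat.eq_zero_or_pos k2 with rfl | hp2
  · simp only [E, if_neg (by omega : k1 ≠ 0), if_pos rfl]
    refine disj_mk (vtx_ne_inf m hm _) ?_ (vtx_ne_inf m hm _) ?_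
    · refine vne m hm fun h => ncast_ne m hm (u := k1) (v := 1)
        (by omega) (by omega) (by omega) ?_
      push_cast
      linear_combination h
    · refine vne m hm fun h => ncast_ne m hm (u := k1 + 1) (v := 0)
        (by omega) (by omega) (by omega) ?_
      push_cast
      linear_combination -h
  · simp only [E, if_neg (by omega : k1 ≠ 0), if_neg (by omega : k2 ≠ 0)]
    refine disj_mk ?_ ?_ ?_ ?_
    · refine vne m hm fun h => ncast_ne m hm (u := k1) (v := k2 + 1)
        (by omega) (by omega) (by omega) ?_
      push_cast
      linear_combination h
    · refine vne m hm fun h => ncast_ne m hm (u := k1 + k2) (v := 1)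
        (by omega) (by omega) (by omega) ?_
      push_cast
      linear_combination h
    · refine vne m hm fun h => ncast_ne m hm (u := k1 + k2 + 1) (v := 0)
        (by omega) (by omega) (by omega) ?_
      push_cast
      linear_combination -h
    · refine vne m hm fun h => ncast_ne m hm (u := k2) (v := k1 + 1)
        (by omega) (by omega) (by omega) ?_
      push_cast
      linear_combination h

lemma E_inj (hm : 2 ≤ m) {r1 r2 : ZMod (2*m-1)} {k1 k2 : ℕ} (hk1 : k1 < m) (hk2 : k2 < m)
    (h : E m hm r1 k1 = E m hm r2 k2) : r1 = r2 ∧ k1 = k2 := by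
  have htwo : IsUnit (2 : ZMod (2*m-1)) := by
    have hc : Nat.Coprime 2 (2*m-1) := by
      rw [Nat.prime_two.coprime_iff_not_dvd]
      omega
    have h2 := (ZMod.isUnit_iff_coprime 2 (2*m-1)).mpr hc
    simpa using h2
  rcases Nat.eq_zero_or_pos k1 with rfl | hp1 <;> rcases Nat.eq_zero_or_pos k2 with rfl | hp2
  · simp only [E, if_pos rfl] at h
    rcases Sym2.eq_iff.mp h with ⟨-, h⟩ | ⟨h, -⟩
    · exact ⟨vtx_injective m hm h, rfl⟩
    · exact absurd h.symm (vtx_ne_inf m hm _)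
  · simp only [E, if_pos rfl, if_neg (by omega : k2 ≠ 0)] at h
    rcases Sym2.eq_iff.mp h with ⟨h, -⟩ | ⟨h, -⟩ <;> exact absurd h (inf_ne_vtx m hm _)
  · simp only [E, if_pos rfl, if_neg (by omega : k1 ≠ 0)] at h
    rcases Sym2.eq_iff.mp h with ⟨h, -⟩ | ⟨-, h⟩ <;> exact absurd h (vtx_ne_inf m hm _)
  · simp only [E, if_neg (by omega : k1 ≠ 0), if_neg (by omega : k2 ≠ 0)] at h
    rcases Sym2.eq_iff.mp h with ⟨hA, hB⟩ | ⟨hA, hB⟩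
    · have hA' := vtx_injective m hm hA
      have hB' := vtx_injective m hm hB
      have hk : ((2*k1 : ℕ) : ZMod (2*m-1)) = ((2*k2 : ℕ) : ZMod (2*m-1)) := by
        push_cast
        linear_combination hA' - hB'
      have hkk : k1 = k2 := by
        have := cast_inj (n := 2*m-1) (by omega) (by omega) hk
        omega
      subst hkk
      exact ⟨add_right_cancel hA', rfl⟩
    · have hA' := vtx_injective m hm hA
      have hB' := vtx_injective m hm hB
      have hr : (2 : ZMod (2*m-1)) * r1 = 2 * r2 := by linear_combination hA' + hB'
      have hrr : r1 = r2 := htwo.mul_left_cancel hr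
      exfalso
      rw [hrr] at hA'
      have hk : ((k1 + k2 : ℕ) : ZMod (2*m-1)) = ((0 : ℕ) : ZMod (2*m-1)) := by
        push_cast
        linear_combination hA'
      have := cast_inj (n := 2*m-1) (by omega) (by omega) hk
      omega

/-- The cyclic edge ordering of `K_{2m}`, as a function on `ℕ`. -/
def g (hm : 2 ≤ m) (i : ℕ) : Sym2 (Fin (2*m)) :=
  E m hm ((i / m : ℕ) : ZMod (2*m-1)) (i % m)

lemma g_period (hm : 2 ≤ m) (i : ℕ) : g m hm (i + m*(2*m-1)) = g m hm i := by
  unfold g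
  have hdiv : (i + m*(2*m-1)) / m = i / m + (2*m-1) :=
    Nat.add_mul_div_left _ _ (by omega : 0 < m)
  have hmod : (i + m*(2*m-1)) % m = i % m := Nat.add_mul_mod_self_left _ _ _
  rw [hdiv, hmod]
  congr 1
  push_cast [ZMod.natCast_self]
  ring

lemma g_add_mul (hm : 2 ≤ m) (j q : ℕ) : g m hm (j + q*(m*(2*m-1))) = g m hm j := by
  induction q with
  | zero => simp
  | succ q ih =>
    have he : j + (q+1)*(m*(2*m-1)) = (j + q*(m*(2*m-1))) + m*(2*m-1) := by ring
    rw [he, g_period, ih]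

lemma g_mod (hm : 2 ≤ m) (i : ℕ) : g m hm (i % (m*(2*m-1))) = g m hm i := by
  conv_rhs => rw [← Nat.mod_add_div i (m*(2*m-1)), mul_comm (m*(2*m-1)) (i / (m*(2*m-1)))]
  rw [g_add_mul]

lemma g_not_diag (hm : 2 ≤ m) (i : ℕ) : ¬ (g m hm i).IsDiag :=
  E_not_diag m hm _ (Nat.mod_lt _ (by omega))

lemma g_inj (hm : 2 ≤ m) {i1 i2 : ℕ} (h1 : i1 < m*(2*m-1)) (h2 : i2 < m*(2*m-1))
    (h : g m hm i1 = g m hm i2) : i1 = i2 := by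
  have hd1 : i1 / m < 2*m-1 := Nat.div_lt_of_lt_mul h1
  have hd2 : i2 / m < 2*m-1 := Nat.div_lt_of_lt_mul h2
  obtain ⟨hr, hk⟩ := E_inj m hm (Nat.mod_lt _ (by omega)) (Nat.mod_lt _ (by omega)) h
  have hdd : i1 / m = i2 / m := cast_inj hd1 hd2 hr
  have e1 := Nat.div_add_mod i1 m
  have e2 := Nat.div_add_mod i2 m
  rw [hdd] at e1
  omega

lemma g_window (hm : 2 ≤ m) (b t : ℕ) (h1 : 1 ≤ t) (h2 : t + 2 ≤ m) :
    edgesDisjoint (g m hm b) (g m hm (b + t)) := by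
  have hb := Nat.div_add_mod b m
  have hsm : b % m < m := Nat.mod_lt _ (by omega : 0 < m)
  by_cases hc : b % m + t < m
  · -- same round
    have he : b + t = (b % m + t) + m * (b / m) := by omega
    have hdiv : (b + t) / m = b / m := by
      rw [he, Nat.add_mul_div_left _ _ (by omega : 0 < m), Nat.div_eq_of_lt hc, zero_add]
    have hmod : (b + t) % m = b % m + t := by
      rw [he, Nat.add_mul_mod_self_left, Nat.mod_eq_of_lt hc]
    unfold g
    rw [hdiv, hmod]
    exact L1 m hm _ hsm hc (by omega)
  · -- adjacent rounds
    have he : b + t = (b % m + t - m) + m * (b / m + 1) := by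
      have : m * (b / m + 1) = m * (b / m) + m := by ring
      omega
    have hlt : b % m + t - m < m := by omega
    have hdiv : (b + t) / m = b / m + 1 := by
      rw [he, Nat.add_mul_div_left _ _ (by omega : 0 < m), Nat.div_eq_of_lt hlt, zero_add]
    have hmod : (b + t) % m = b % m + t - m := by
      rw [he, Nat.add_mul_mod_self_left, Nat.mod_eq_of_lt hlt]
    unfold g
    rw [hdiv, hmod]
    have hcast : ((b / m + 1 : ℕ) : ZMod (2*m-1)) = ((b / m : ℕ) : ZMod (2*m-1)) + 1 := by
      push_cast; ring
    rw [hcast]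
    exact L2 m hm _ hsm (by omega)

lemma edgeCount_top : edgeCount (⊤ : SimpleGraph (Fin (2*m))) = m*(2*m-1) := by
  classical
  unfold edgeCount
  rw [Nat.card_eq_fintype_card, ← SimpleGraph.edgeFinset_card,
    SimpleGraph.card_edgeFinset_top_eq_card_choose_two, Fintype.card_fin,
    Nat.choose_two_right]
  have h : 2*m*(2*m-1) = 2*(m*(2*m-1)) := by ring
  omega

/-- Finset of vertices of an edge. -/
def vfin {q : ℕ} (e : Sym2 (Fin q)) : Finset (Fin q) :=
  Finset.univ.filter (fun v => v ∈ e)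

lemma mem_vfin {q : ℕ} {v : Fin q} {e : Sym2 (Fin q)} : v ∈ vfin e ↔ v ∈ e := by
  simp [vfin]

lemma vfin_mk {q : ℕ} (a b : Fin q) : vfin s(a,b) = {a, b} := by
  ext v
  simp [vfin, Sym2.mem_iff]

lemma exists_ne_of_mem_top {q : ℕ} (e : Sym2 (Fin q))
    (he : e ∈ (⊤ : SimpleGraph (Fin q)).edgeSet) : ∃ a b, a ≠ b ∧ e = s(a,b) := by
  induction e using Sym2.ind with
  | _ a b => exact ⟨a, b, by simpa using he, rfl⟩

lemma disj_vfin {q : ℕ} {e1 e2 : Sym2 (Fin q)} (h : edgesDisjoint e1 e2) :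
    Disjoint (vfin e1) (vfin e2) := by
  rw [Finset.disjoint_left]
  intro v hv hv'
  exact h v (mem_vfin.mp hv) (mem_vfin.mp hv')

/-- The upper bound: no cyclic ordering has every `m` consecutive edges a matching. -/
lemma no_good (hm : 2 ≤ m) {N : ℕ} (hN : N = m*(2*m-1))
    (f : ZMod N ≃ (⊤ : SimpleGraph (Fin (2*m))).edgeSet)
    (hf : CyclicGood ⊤ f m) : False := by
  haveI : NeZero N := ⟨by rw [hN]; exact Nat.mul_ne_zero (by omega) (by omega)⟩
  set T := (Finset.range m).biUnion
    (fun t => vfin (f ((t : ℕ) : ZMod N) : Sym2 (Fin (2*m)))) with hT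
  have hdisj : ∀ t1 ∈ Finset.range m, ∀ t2 ∈ Finset.range m, t1 ≠ t2 →
      Disjoint (vfin (f ((t1 : ℕ) : ZMod N) : Sym2 (Fin (2*m))))
        (vfin (f ((t2 : ℕ) : ZMod N) : Sym2 (Fin (2*m)))) := by
    intro t1 h1 t2 h2 hne
    rw [Finset.mem_range] at h1 h2
    apply disj_vfin
    have hd := hf 0 t1 t2 h1 h2 hne
    simpa using hd
  have hcardT : T.card = 2*m := by
    rw [hT, Finset.card_biUnion hdisj]
    have hc : ∀ t ∈ Finset.range m,
        (vfin (f ((t : ℕ) : ZMod N) : Sym2 (Fin (2*m)))).card = 2 := by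
      intro t _
      obtain ⟨a, b, hab, he⟩ := exists_ne_of_mem_top _ (f ((t : ℕ) : ZMod N)).2
      rw [he, vfin_mk, Finset.card_pair hab]
    rw [Finset.sum_congr rfl hc, Finset.sum_const, Finset.card_range, smul_eq_mul]
    ring
  have hTuniv : T = Finset.univ :=
    Finset.eq_univ_of_card _ (by rw [hcardT, Fintype.card_fin])
  obtain ⟨a, b, hab, hfm⟩ := exists_ne_of_mem_top _ (f ((m : ℕ) : ZMod N)).2
  obtain ⟨c, d, hcd, hf0⟩ := exists_ne_of_mem_top _ (f ((0 : ℕ) : ZMod N)).2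
  have key : ∀ v : Fin (2*m), v ∈ (f ((m : ℕ) : ZMod N) : Sym2 (Fin (2*m))) →
      v ∈ (f ((0 : ℕ) : ZMod N) : Sym2 (Fin (2*m))) := by
    intro v hv
    have hvT : v ∈ T := hTuniv ▸ Finset.mem_univ v
    rw [hT, Finset.mem_biUnion] at hvT
    obtain ⟨t, ht, hvt⟩ := hvT
    rw [Finset.mem_range] at ht
    rcases Nat.eq_zero_or_pos t with rfl | htpos
    · exact mem_vfin.mp hvt
    · exfalso
      have hd := hf 1 (m-1) (t-1) (by omega) (by omega) (by omega)
      have e1 : (1 : ZMod N) + ((m-1 : ℕ) : ZMod N) = ((m : ℕ) : ZMod N) := by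
        have hme : (m : ℕ) = 1 + (m-1) := by omega
        conv_rhs => rw [hme]
        push_cast
        ring
      have e2 : (1 : ZMod N) + ((t-1 : ℕ) : ZMod N) = ((t : ℕ) : ZMod N) := by
        have hte : (t : ℕ) = 1 + (t-1) := by omega
        conv_rhs => rw [hte]
        push_cast
        ring
      rw [e1, e2] at hd
      exact hd v hv (mem_vfin.mp hvt)
  have ha := key a (by rw [hfm]; exact Sym2.mem_mk_left a b)
  have hb := key b (by rw [hfm]; exact Sym2.mem_mk_right a b)
  rw [hf0, Sym2.mem_iff] at ha hb
  have hee : (f ((m : ℕ) : ZMod N) : Sym2 (Fin (2*m))) = (f ((0 : ℕ) : ZMod N) : Sym2 (Fin (2*m))) := by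
    rw [hfm, hf0]
    rcases ha with rfl | rfl <;> rcases hb with rfl | rfl
    · exact absurd rfl hab
    · rfl
    · exact Sym2.eq_swap
    · exact absurd rfl hab
  have hz : ((m : ℕ) : ZMod N) = ((0 : ℕ) : ZMod N) := f.injective (Subtype.ext hee)
  rw [Nat.cast_zero, ZMod.natCast_eq_zero_iff] at hz
  have hle := Nat.le_of_dvd (by omega) hz
  have h3 : m*3 ≤ m*(2*m-1) := Nat.mul_le_mul_left m (by omega)
  rw [hN] at hle
  omega

/-- The lower bound: construction of a good cyclic ordering. -/
lemma exists_good (hm : 2 ≤ m) {N : ℕ} (hN : N = m*(2*m-1)) :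
    ∃ f : ZMod N ≃ (⊤ : SimpleGraph (Fin (2*m))).edgeSet, CyclicGood ⊤ f (m-1) := by
  subst hN
  set N := m*(2*m-1) with hN
  haveI : NeZero N := ⟨Nat.mul_ne_zero (by omega) (by omega)⟩
  have hNval : Nat.card (ZMod N) = N := Nat.card_zmod N
  have hmem : ∀ i : ℕ, g m hm i ∈ (⊤ : SimpleGraph (Fin (2*m))).edgeSet := by
    intro i
    rw [SimpleGraph.edgeSet_top, Set.mem_compl_iff, Sym2.mem_diagSet]
    exact g_not_diag m hm i
  set F0 : ZMod N → (⊤ : SimpleGraph (Fin (2*m))).edgeSet :=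
    fun z => ⟨g m hm z.val, hmem z.val⟩ with hF0
  have hinj : Function.Injective F0 := by
    intro z1 z2 h
    have hval : g m hm z1.val = g m hm z2.val := congrArg Subtype.val h
    have h1 : z1.val < m*(2*m-1) := ZMod.val_lt z1
    have h2 : z2.val < m*(2*m-1) := ZMod.val_lt z2
    exact ZMod.val_injective N (g_inj m hm h1 h2 hval)
  have hbij : Function.Bijective F0 := by
    rw [Nat.bijective_iff_injective_and_card]
    refine ⟨hinj, ?_⟩
    rw [hNval, hN, ← edgeCount_top m]
    rfl
  refine ⟨Equiv.ofBijective F0 hbij, ?_⟩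
  have hNm : m - 1 < N := by
    have h3 : m*1 ≤ m*(2*m-1) := Nat.mul_le_mul_left m (by omega)
    omega
  have main : ∀ (i : ZMod N) (j k : ℕ), j < k → k < m - 1 →
      edgesDisjoint ((Equiv.ofBijective F0 hbij) (i + (j : ZMod N)) : Sym2 (Fin (2*m)))
        ((Equiv.ofBijective F0 hbij) (i + (k : ZMod N)) : Sym2 (Fin (2*m))) := by
    intro i j k hjk hk
    show edgesDisjoint (g m hm (i + (j : ZMod N)).val) (g m hm (i + (k : ZMod N)).val)
    have hvj : (i + (j : ZMod N)).val = (i.val + j) % N := by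
      rw [ZMod.val_add, ZMod.val_natCast, Nat.mod_eq_of_lt (by omega : j < N)]
    have hvk : (i + (k : ZMod N)).val = (i.val + k) % N := by
      rw [ZMod.val_add, ZMod.val_natCast, Nat.mod_eq_of_lt (by omega : k < N)]
    have hgj : g m hm ((i.val + j) % N) = g m hm (i.val + j) := g_mod m hm _
    have hgk : g m hm ((i.val + k) % N) = g m hm (i.val + k) := g_mod m hm _
    rw [hvj, hvk, hgj, hgk]
    have hw := g_window m hm (i.val + j) (k - j) (by omega) (by omega)
    have he : i.val + j + (k - j) = i.val + k := by omega
    rwa [he] at hw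
  intro i j k hj hk hjk
  rcases hjk.lt_or_gt with h | h
  · exact main i j k h hk
  · exact edgesDisjoint_symm (main i k j h hj)

end CMSaux

/-- For every integer `m ≥ 2`, `cms (K_{2m}) = m - 1`. -/
theorem cms_completeGraph_even (m : ℕ) (hm : 2 ≤ m) :
    cms (⊤ : SimpleGraph (Fin (2 * m))) = m - 1 := by
  have hN : edgeCount (⊤ : SimpleGraph (Fin (2 * m))) = m * (2*m-1) := CMSaux.edgeCount_top m
  unfold cms
  apply IsGreatest.csSup_eq
  constructor
  · exact CMSaux.exists_good m hm hN
  · rintro d ⟨f, hf⟩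
    by_contra hd
    push_neg at hd
    have hm' : m ≤ d := by omega
    exact CMSaux.no_good m hm hN f
      (fun i j k hj hk hne => hf i j k (lt_of_lt_of_le hj hm') (lt_of_lt_of_le hk hm') hne)
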